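/- Let Γ be a vertex-transitive reflexive locally-finite relation on V and v ∈ V. Then μ(v) ≥ |Γ(v)| − |Ω(v)| + |Ω⁻(v)| − 1, where Ω(v) = Γ(v) ∩ K_v is the kernel graph. -/

import Mathlib

open Set Pointwise

variable {V : Type*}

/-- Image of a set under the relation. -/
def img (Γ : V → Set V) (F : Set V) : Set V := ⋃ x ∈ F, Γ x
/-- Reverse relation. -/
def rev (Γ : V → Set V) : V → Set V := fun y => {x | y ∈ Γ x}
/-- Boundary ∂(F) = Γ(F) \ F. -/
def bd (Γ : V → Set V) (F : Set V) : Set V := img Γ F \ F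
/-- ∇(F) = V \ (F ∪ Γ(F)). -/
def nab (Γ : V → Set V) (F : Set V) : Set V := (F ∪ img Γ F)ᶜ
/-- Reflexive relation. -/
def Refl (Γ : V → Set V) : Prop := ∀ x, x ∈ Γ x
/-- Locally finite relation. -/
def LocFin (Γ : V → Set V) : Prop := ∀ x, (Γ x).Finite
/-- Automorphism of the relation. -/
def IsAuto (Γ : V → Set V) (φ : V ≃ V) : Prop := ∀ x, Γ (φ x) = φ '' Γ x
/-- Vertex-transitivity. -/
def VT (Γ : V → Set V) : Prop := ∀ x y : V, ∃ φ : V ≃ V, IsAuto Γ φ ∧ φ x = y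
/-- A finite v-Moser set. -/
def MoserSet (Γ : V → Set V) (v : V) (F : Set V) : Prop :=
  F.Finite ∧ v ∈ F ∧ rev Γ v ∩ F = {v}
/-- μ(v): minimum boundary size over v-Moser sets. -/
noncomputable def mu (Γ : V → Set V) (v : V) : ℕ :=
  sInf {n | ∃ F, MoserSet Γ v F ∧ (bd Γ F).ncard = n}
/-- A v-molecule: Moser set of minimum boundary. -/
def Molecule (Γ : V → Set V) (v : V) (F : Set V) : Prop :=
  MoserSet Γ v F ∧ (bd Γ F).ncard = mu Γ v
/-- The v-kernel: the unique minimal v-molecule. -/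
def IsKernel (Γ : V → Set V) (v : V) (K : Set V) : Prop :=
  Molecule Γ v K ∧ ∀ F, Molecule Γ v F → K ⊆ F
/-- Weak connectivity κ₀. -/
noncomputable def kappa0 (Γ : V → Set V) : ℕ :=
  sInf {n | ∃ X : Set V, X.Finite ∧ X.Nonempty ∧ (bd Γ X).ncard = n}
/-- Weak fragment. -/
def WeakFragment (Γ : V → Set V) (X : Set V) : Prop :=
  X.Finite ∧ X.Nonempty ∧ (bd Γ X).ncard = kappa0 Γ
/-- Weak atom: a weak fragment of minimum cardinality. -/
def WeakAtom (Γ : V → Set V) (X : Set V) : Prop :=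
  WeakFragment Γ X ∧ ∀ Y, WeakFragment Γ Y → X.ncard ≤ Y.ncard

section aux
variable {Γ : V → Set V} {φ : V ≃ V} {F A B : Set V} {v : V}

lemma mem_img' {y : V} : y ∈ img Γ F ↔ ∃ x ∈ F, y ∈ Γ x := by simp [img]

lemma img_finite' (hlf : LocFin Γ) (hF : F.Finite) : (img Γ F).Finite :=
  hF.biUnion (fun x _ => hlf x)

lemma bd_finite' (hlf : LocFin Γ) (hF : F.Finite) : (bd Γ F).Finite :=
  (img_finite' hlf hF).diff

lemma isAuto_symm (h : IsAuto Γ φ) : IsAuto Γ φ.symm := by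
  intro x
  have := h (φ.symm x)
  rw [Equiv.apply_symm_apply] at this
  rw [this, ← Set.image_comp]
  simp

lemma img_image (h : IsAuto Γ φ) : img Γ (φ '' F) = φ '' img Γ F := by
  ext y
  simp only [mem_img', Set.mem_image]
  constructor
  · rintro ⟨x, ⟨z, hz, rfl⟩, hy⟩
    rw [h z] at hy
    obtain ⟨w, hw, rfl⟩ := hy
    exact ⟨w, ⟨z, hz, hw⟩, rfl⟩
  · rintro ⟨w, hw, rfl⟩
    obtain ⟨z, hz, hwz⟩ := hw
    exact ⟨φ z, ⟨z, hz, rfl⟩, by rw [h z]; exact ⟨w, hwz, rfl⟩⟩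

lemma bd_image (h : IsAuto Γ φ) : bd Γ (φ '' F) = φ '' bd Γ F := by
  rw [bd, bd, img_image h, Set.image_diff φ.injective]

lemma rev_image (h : IsAuto Γ φ) : rev Γ (φ v) = φ '' rev Γ v := by
  ext x
  constructor
  · intro hx
    refine ⟨φ.symm x, ?_, by simp⟩
    have := isAuto_symm h x
    show v ∈ Γ (φ.symm x)
    rw [this]
    exact ⟨φ v, hx, by simp⟩
  · rintro ⟨z, hz, rfl⟩
    show φ v ∈ Γ (φ z)
    rw [h z]
    exact ⟨v, hz, rfl⟩

lemma moser_image (h : IsAuto Γ φ) (hF : MoserSet Γ v F) : MoserSet Γ (φ v) (φ '' F) := by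
  refine ⟨hF.1.image _, ⟨v, hF.2.1, rfl⟩, ?_⟩
  rw [rev_image h, ← Set.image_inter φ.injective, hF.2.2, Set.image_singleton]

lemma mu_le' (hF : MoserSet Γ v F) : mu Γ v ≤ (bd Γ F).ncard :=
  Nat.sInf_le ⟨F, hF, rfl⟩

lemma mu_auto (h : IsAuto Γ φ) (v : V) : mu Γ (φ v) = mu Γ v := by
  unfold mu
  congr 1
  ext n
  simp only [Set.mem_setOf_eq]
  constructor
  · rintro ⟨F, hF, rfl⟩
    refine ⟨φ.symm '' F, ?_, ?_⟩
    · have := moser_image (isAuto_symm h) hF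
      rwa [Equiv.symm_apply_apply] at this
    · rw [bd_image (isAuto_symm h), Set.ncard_image_of_injective _ φ.symm.injective]
  · rintro ⟨F, hF, rfl⟩
    exact ⟨φ '' F, moser_image h hF,
      by rw [bd_image h, Set.ncard_image_of_injective _ φ.injective]⟩

lemma kernel_image (h : IsAuto Γ φ) {Kv : Set V} (hKv : IsKernel Γ v Kv) :
    IsKernel Γ (φ v) (φ '' Kv) := by
  refine ⟨⟨moser_image h hKv.1.1, ?_⟩, ?_⟩
  · rw [bd_image h, Set.ncard_image_of_injective _ φ.injective, hKv.1.2, mu_auto h]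
  · intro F hF
    have hF' : Molecule Γ v (φ.symm '' F) := by
      constructor
      · have := moser_image (isAuto_symm h) hF.1
        rwa [Equiv.symm_apply_apply] at this
      · rw [bd_image (isAuto_symm h), Set.ncard_image_of_injective _ φ.symm.injective,
          hF.2, mu_auto h]
    have := hKv.2 _ hF'
    intro x hx
    obtain ⟨z, hz, rfl⟩ := hx
    obtain ⟨w, hw, hwz⟩ := this hz
    rw [← hwz]
    simpa using hw

lemma kernel_unique {K1 K2 : Set V} (h1 : IsKernel Γ v K1) (h2 : IsKernel Γ v K2) :
    K1 = K2 :=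
  subset_antisymm (h1.2 _ h2.1) (h2.2 _ h1.1)

lemma submod (hr : Refl Γ) (hlf : LocFin Γ) (hA : A.Finite) (hB : B.Finite) :
    (bd Γ (A ∩ B)).ncard + (bd Γ (A ∪ B)).ncard ≤ (bd Γ A).ncard + (bd Γ B).ncard := by
  set X := (img Γ A ∩ img Γ B) \ (A ∩ B) with hXdef
  set Y := (img Γ A ∪ img Γ B) \ (A ∪ B) with hYdef
  set P := bd Γ A with hPdef
  set Q := bd Γ B with hQdef
  have hiA := img_finite' hlf hA
  have hiB := img_finite' hlf hB
  have hXfin : X.Finite := (hiA.inter_of_left _).diff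
  have hYfin : Y.Finite := (hiA.union hiB).diff
  have hPfin : P.Finite := bd_finite' hlf hA
  have hQfin : Q.Finite := bd_finite' hlf hB
  have h1 : bd Γ (A ∩ B) ⊆ X := by
    rintro y ⟨hy1, hy2⟩
    obtain ⟨x, hx, hyx⟩ := mem_img'.1 hy1
    exact ⟨⟨mem_img'.2 ⟨x, hx.1, hyx⟩, mem_img'.2 ⟨x, hx.2, hyx⟩⟩, hy2⟩
  have h2 : bd Γ (A ∪ B) = Y := by
    rw [bd, hYdef]
    congr 1
    ext y
    simp only [mem_img', Set.mem_union, Set.mem_inter_iff]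
    constructor
    · rintro ⟨x, hx | hx, hyx⟩
      · exact Or.inl ⟨x, hx, hyx⟩
      · exact Or.inr ⟨x, hx, hyx⟩
    · rintro (⟨x, hx, hyx⟩ | ⟨x, hx, hyx⟩)
      · exact ⟨x, Or.inl hx, hyx⟩
      · exact ⟨x, Or.inr hx, hyx⟩
  have hU : X ∪ Y ⊆ P ∪ Q := by
    rintro y (⟨⟨hy1, hy2⟩, hy3⟩ | ⟨hy1, hy2⟩)
    · rcases Classical.em (y ∈ A) with h | h
      · exact Or.inr ⟨hy2, fun hB' => hy3 ⟨h, hB'⟩⟩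
      · exact Or.inl ⟨hy1, h⟩
    · rcases hy1 with h | h
      · exact Or.inl ⟨h, fun h' => hy2 (Or.inl h')⟩
      · exact Or.inr ⟨h, fun h' => hy2 (Or.inr h')⟩
  have hI : X ∩ Y ⊆ P ∩ Q := by
    rintro y ⟨⟨⟨hy1, hy2⟩, _⟩, ⟨_, hy4⟩⟩
    exact ⟨⟨hy1, fun h => hy4 (Or.inl h)⟩, ⟨hy2, fun h => hy4 (Or.inr h)⟩⟩
  calc (bd Γ (A ∩ B)).ncard + (bd Γ (A ∪ B)).ncard
      ≤ X.ncard + Y.ncard := by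
        rw [h2]
        exact Nat.add_le_add_right (Set.ncard_le_ncard h1 hXfin) _
    _ = (X ∪ Y).ncard + (X ∩ Y).ncard := (Set.ncard_union_add_ncard_inter X Y hXfin hYfin).symm
    _ ≤ (P ∪ Q).ncard + (P ∩ Q).ncard := by
        exact add_le_add (Set.ncard_le_ncard hU (hPfin.union hQfin))
          (Set.ncard_le_ncard hI (hPfin.inter_of_left _))
    _ = P.ncard + Q.ncard := Set.ncard_union_add_ncard_inter P Q hPfin hQfin

end aux

/-- μ(v) ≥ |Γ(v)| − |Ω(v)| + |Ω⁻(v)| − 1. -/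
theorem stmt9 {V : Type*} (Γ : V → Set V) (hvt : VT Γ) (hr : Refl Γ) (hlf : LocFin Γ)
    (K : V → Set V) (hK : ∀ v, IsKernel Γ v (K v)) (v : V) :
    (Γ v).ncard - ((fun v => Γ v ∩ K v) v).ncard
        + (rev (fun v => Γ v ∩ K v) v).ncard - 1 ≤ mu Γ v := by
  have hKvM := (hK v).1
  have hKvfin : (K v).Finite := hKvM.1.1
  have hvK : v ∈ K v := hKvM.1.2.1
  have hrevKv : rev Γ v ∩ K v = {v} := hKvM.1.2.2
  have hbdfin : (bd Γ (K v)).Finite := bd_finite' hlf hKvfin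
  have hmuKv : (bd Γ (K v)).ncard = mu Γ v := hKvM.2
  -- kernels are translates: equal cardinality, equal mu
  have htrans : ∀ x : V, (K x).ncard = (K v).ncard ∧ mu Γ x = mu Γ v := by
    intro x
    obtain ⟨φ, hφ, hφv⟩ := hvt v x
    have h1 : IsKernel Γ x (φ '' K v) := hφv ▸ kernel_image hφ (hK v)
    have h2 : K x = φ '' K v := kernel_unique (hK x) h1
    refine ⟨by rw [h2, Set.ncard_image_of_injective _ φ.injective], ?_⟩
    rw [← hφv, mu_auto hφ]
  set A := Γ v \ K v with hAdef
  set B := rev (fun u => Γ u ∩ K u) v \ {v} with hBdef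
  have hA_sub : A ⊆ bd Γ (K v) := by
    rintro a ⟨ha1, ha2⟩
    exact ⟨mem_img'.2 ⟨v, hvK, ha1⟩, ha2⟩
  have hB_sub : B ⊆ bd Γ (K v) := by
    rintro x ⟨hx1, hx2⟩
    have hxne : x ≠ v := hx2
    obtain ⟨hxΓ, hxK⟩ : v ∈ Γ x ∧ v ∈ K x := hx1
    have hxnKv : x ∉ K v := by
      intro h
      have : x ∈ rev Γ v ∩ K v := ⟨hxΓ, h⟩
      rw [hrevKv] at this
      exact hxne this
    refine ⟨?_, hxnKv⟩
    by_contra hc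
    -- K v ∪ K x is an x-Moser set
    have hKxM := (hK x).1
    have hKxfin : (K x).Finite := hKxM.1.1
    have hxKx : x ∈ K x := hKxM.1.2.1
    have hrevKx : rev Γ x ∩ K x = {x} := hKxM.1.2.2
    have hUmoser : MoserSet Γ x (K v ∪ K x) := by
      refine ⟨hKvfin.union hKxfin, Or.inr hxKx, ?_⟩
      ext u
      constructor
      · rintro ⟨hu1, hu2 | hu2⟩
        · exact absurd (mem_img'.2 ⟨u, hu2, hu1⟩) hc
        · have : u ∈ rev Γ x ∩ K x := ⟨hu1, hu2⟩
          rwa [hrevKx] at this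
      · rintro rfl
        exact ⟨hr u, Or.inr hxKx⟩
    have hImoser : MoserSet Γ v (K v ∩ K x) := by
      refine ⟨hKvfin.inter_of_left _, ⟨hvK, hxK⟩, ?_⟩
      apply subset_antisymm
      · intro u hu
        have : u ∈ rev Γ v ∩ K v := ⟨hu.1, hu.2.1⟩
        rwa [hrevKv] at this
      · rintro u rfl
        exact ⟨hr u, hvK, hxK⟩
    have h1 : mu Γ v ≤ (bd Γ (K v ∩ K x)).ncard := mu_le' hImoser
    have h2 : mu Γ v ≤ (bd Γ (K v ∪ K x)).ncard := by
      rw [← (htrans x).2]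
      exact mu_le' hUmoser
    have h3 := submod hr hlf hKvfin hKxfin (A := K v) (B := K x)
    rw [hmuKv, (hK x).1.2, (htrans x).2] at h3
    have h4 : (bd Γ (K v ∩ K x)).ncard = mu Γ v := by omega
    have h5 : K v ⊆ K v ∩ K x := (hK v).2 _ ⟨hImoser, h4⟩
    have h6 : K v = K x := Set.eq_of_subset_of_ncard_le
      (fun y hy => (h5 hy).2) (le_of_eq (htrans x).1) hKxfin
    exact hxnKv (h6 ▸ hxKx)
  have hAB : ∀ x, x ∈ A → x ∉ B := by
    rintro x ⟨hx1, _⟩ ⟨⟨hxΓ, hxK⟩, hxne⟩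
    have : v ∈ rev Γ x ∩ K x := ⟨hx1, hxK⟩
    rw [(hK x).1.1.2.2] at this
    exact hxne this.symm
  -- cardinalities
  have hΓfin := hlf v
  have hAcard : (Γ v ∩ K v).ncard + A.ncard = (Γ v).ncard := by
    rw [hAdef]
    exact Set.ncard_inter_add_ncard_diff_eq_ncard (Γ v) (K v) hΓfin
  have hBfin : B.Finite := hbdfin.subset hB_sub
  have hvnB : v ∉ B := fun h => h.2 rfl
  have hrevcard : (rev (fun u => Γ u ∩ K u) v).ncard = B.ncard + 1 := by
    have hrev : rev (fun u => Γ u ∩ K u) v = insert v B := by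
      ext x
      constructor
      · intro hx
        rcases eq_or_ne x v with rfl | hne
        · exact Or.inl rfl
        · exact Or.inr ⟨hx, hne⟩
      · rintro (rfl | ⟨hx, _⟩)
        · exact ⟨hr x, hvK⟩
        · exact hx
    rw [hrev, Set.ncard_insert_of_notMem hvnB hBfin]
  have hsum : A.ncard + B.ncard ≤ (bd Γ (K v)).ncard := by
    have hdisj : Disjoint A B := Set.disjoint_left.2 hAB
    rw [← Set.ncard_union_eq hdisj (hbdfin.subset hA_sub) hBfin]
    exact Set.ncard_le_ncard (Set.union_subset hA_sub hB_sub) hbdfin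
  show (Γ v).ncard - (Γ v ∩ K v).ncard + (rev (fun u => Γ u ∩ K u) v).ncard - 1 ≤ mu Γ v
  omega
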